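/- Supremum of the scaled negative von Neumann entropy on the Warmuth–Kuzmin feasible set: over 𝒲 = {W symmetric : W ⪰ 0, ‖W‖₂ ≤ 1/(d-k), tr W = 1}, the maximum of Ψ(W) = (1/4)(tr(W log W) + log d) is (1/4)·log(d/(d-k)), attained when W has exactly d-k eigenvalues equal to 1/(d-k); moreover (1/4)·log(d/(d-k)) ≤ (1/4)·k/(d-k). -/

import Mathlib

open Matrix

/-- Matrix logarithm of a Hermitian matrix, via the spectral decomposition
(junk value `0` on non-Hermitian matrices; `log 0 = 0` so that `0 · log 0 = 0`). -/
noncomputable def matLog {d : ℕ} (A : Matrix (Fin d) (Fin d) ℝ) :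
    Matrix (Fin d) (Fin d) ℝ :=
  if hA : A.IsHermitian then
    (hA.eigenvectorUnitary : Matrix (Fin d) (Fin d) ℝ) *
      Matrix.diagonal (fun i => Real.log (hA.eigenvalues i)) *
      star (hA.eigenvectorUnitary : Matrix (Fin d) (Fin d) ℝ)
  else 0

/-- The Warmuth–Kuzmin feasible set: `W ⪰ 0`, spectral norm at most `1/(d-k)`, and
`tr W = 1`. -/
def feasWK (d k : ℕ) : Set (Matrix (Fin d) (Fin d) ℝ) :=
  {W | W.PosSemidef ∧
    ((1 / ((d : ℝ) - (k : ℝ))) • (1 : Matrix (Fin d) (Fin d) ℝ) - W).PosSemidef ∧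
    W.trace = 1}

/-- Scaled negative von Neumann entropy `Ψ(W) = (1/4)(tr(W log W) + log d)`. -/
noncomputable def vnPsi {d : ℕ} (W : Matrix (Fin d) (Fin d) ℝ) : ℝ :=
  (1 / 4 : ℝ) * ((W * matLog W).trace + Real.log d)


lemma traceMulLog {d : ℕ} {A : Matrix (Fin d) (Fin d) ℝ} (hA : A.IsHermitian) :
    (A * matLog A).trace = ∑ i, hA.eigenvalues i * Real.log (hA.eigenvalues i) := by
  set U : Matrix (Fin d) (Fin d) ℝ := (hA.eigenvectorUnitary : Matrix (Fin d) (Fin d) ℝ) with hU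
  have hUU : star U * U = 1 := Unitary.coe_star_mul_self _
  have hsp : A = U * Matrix.diagonal hA.eigenvalues * star U := by
    have := hA.spectral_theorem
    rwa [RCLike.ofReal_real_eq_id, Function.id_comp, Unitary.conjStarAlgAut_apply] at this
  rw [matLog, dif_pos hA]
  set M : Matrix (Fin d) (Fin d) ℝ :=
    U * Matrix.diagonal (fun i => Real.log (hA.eigenvalues i)) * star U with hM
  have h1 : A * M = (U * Matrix.diagonal hA.eigenvalues * star U) * M :=
    congrArg (fun B => B * M) hsp
  have h2 : (U * Matrix.diagonal hA.eigenvalues * star U) * M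
      = U * (Matrix.diagonal hA.eigenvalues *
        Matrix.diagonal (fun i => Real.log (hA.eigenvalues i))) * star U := by
    have e : U * Matrix.diagonal hA.eigenvalues * star U *
        (U * Matrix.diagonal (fun i => Real.log (hA.eigenvalues i)) * star U)
        = U * Matrix.diagonal hA.eigenvalues * (star U * U) *
            Matrix.diagonal (fun i => Real.log (hA.eigenvalues i)) * star U := by
      noncomm_ring
    rw [hM, e, hUU, Matrix.mul_one,
      Matrix.mul_assoc U (Matrix.diagonal hA.eigenvalues)
        (Matrix.diagonal (fun i => Real.log (hA.eigenvalues i)))]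
  rw [h1, h2, Matrix.diagonal_mul_diagonal, Matrix.trace_mul_comm, ← Matrix.mul_assoc, hUU,
    Matrix.one_mul, Matrix.trace_diagonal]

lemma trace_eq_sum_eigs {d : ℕ} {A : Matrix (Fin d) (Fin d) ℝ} (hA : A.IsHermitian) :
    A.trace = ∑ i, hA.eigenvalues i := by
  have hsp := hA.spectral_theorem
  rw [RCLike.ofReal_real_eq_id, Function.id_comp, Unitary.conjStarAlgAut_apply] at hsp
  conv_lhs => rw [hsp]
  rw [Matrix.trace_mul_comm, ← Matrix.mul_assoc, Unitary.coe_star_mul_self, Matrix.one_mul,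
    Matrix.trace_diagonal]

lemma eig_le {d : ℕ} {A : Matrix (Fin d) (Fin d) ℝ} (hA : A.IsHermitian) (c : ℝ)
    (h : (c • (1 : Matrix (Fin d) (Fin d) ℝ) - A).PosSemidef) (i : Fin d) :
    hA.eigenvalues i ≤ c := by
  set v : Fin d → ℝ := ⇑(hA.eigenvectorBasis i) with hv
  have hnorm : dotProduct (star v) v = 1 := by
    have h1 : ‖hA.eigenvectorBasis i‖ = 1 := hA.eigenvectorBasis.orthonormal.1 i
    have := EuclideanSpace.inner_eq_star_dotProduct (𝕜 := ℝ) (hA.eigenvectorBasis i) (hA.eigenvectorBasis i)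
    rw [real_inner_self_eq_norm_sq, h1] at this
    simpa using this.symm
  have h2 := h.dotProduct_mulVec_nonneg v
  rw [Matrix.sub_mulVec, Matrix.smul_mulVec, Matrix.one_mulVec,
    hA.mulVec_eigenvectorBasis, dotProduct_sub, dotProduct_smul,
    dotProduct_smul, hnorm] at h2
  simp only [smul_eq_mul, mul_one] at h2
  linarith

/-- Over the Warmuth–Kuzmin feasible set, the maximum of `Ψ` is
`(1/4)·log(d/(d-k))`, attained at a matrix with exactly `d-k` eigenvalues equal to
`1/(d-k)`; moreover this bound is at most `(1/4)·k/(d-k)`. -/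
theorem stmt19 (d k : ℕ) (hk : 0 < k) (hkd : k < d) :
    (∀ W ∈ feasWK d k,
      vnPsi W ≤ (1 / 4 : ℝ) * Real.log ((d : ℝ) / ((d : ℝ) - (k : ℝ)))) ∧
    ((Matrix.diagonal (fun i : Fin d =>
        if (i : ℕ) < d - k then 1 / ((d : ℝ) - (k : ℝ)) else 0)) ∈ feasWK d k ∧
      vnPsi (Matrix.diagonal (fun i : Fin d =>
          if (i : ℕ) < d - k then 1 / ((d : ℝ) - (k : ℝ)) else 0)) =
        (1 / 4 : ℝ) * Real.log ((d : ℝ) / ((d : ℝ) - (k : ℝ)))) ∧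
    (1 / 4 : ℝ) * Real.log ((d : ℝ) / ((d : ℝ) - (k : ℝ))) ≤
      (1 / 4 : ℝ) * ((k : ℝ) / ((d : ℝ) - (k : ℝ))) := by
  have hkd' : (k : ℝ) < (d : ℝ) := by exact_mod_cast hkd
  have hdk : (0:ℝ) < (d : ℝ) - (k : ℝ) := by linarith
  have hd0 : (0:ℝ) < (d : ℝ) := by
    have : (0:ℝ) ≤ (k:ℝ) := by positivity
    linarith
  set c : ℝ := 1 / ((d : ℝ) - (k : ℝ)) with hc
  have hcpos : 0 < c := by positivity
  have hlogc : Real.log c = - Real.log ((d:ℝ) - (k:ℝ)) := by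
    rw [hc, one_div, Real.log_inv]
  have hlogd : Real.log c + Real.log d = Real.log ((d : ℝ) / ((d : ℝ) - (k : ℝ))) := by
    rw [hlogc, Real.log_div (ne_of_gt hd0) (ne_of_gt hdk)]; ring
  set f : Fin d → ℝ := fun i => if (i : ℕ) < d - k then c else 0 with hf
  set W₀ : Matrix (Fin d) (Fin d) ℝ := Matrix.diagonal f with hW₀
  -- trace of W₀
  have hfilter : Finset.filter (fun j => j < d - k) (Finset.range d) = Finset.range (d - k) := by
    ext j; simp only [Finset.mem_filter, Finset.mem_range]; omega
  have htr : W₀.trace = 1 := by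
    rw [hW₀, Matrix.trace_diagonal, hf]
    rw [Fin.sum_univ_eq_sum_range (fun j => if j < d - k then c else 0) d]
    rw [Finset.sum_ite, Finset.sum_const, Finset.sum_const_zero, add_zero, hfilter,
      Finset.card_range]
    have : ((d - k : ℕ) : ℝ) = (d : ℝ) - (k : ℝ) := by
      rw [Nat.cast_sub (le_of_lt hkd)]
    rw [nsmul_eq_mul, this, hc]
    field_simp
  -- feasibility
  have hpsd : W₀.PosSemidef := by
    rw [hW₀]
    refine Matrix.posSemidef_diagonal_iff.mpr fun i => ?_
    rw [hf]; dsimp only; split_ifs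
    · exact le_of_lt hcpos
    · exact le_refl 0
  have hdiag2 : c • (1 : Matrix (Fin d) (Fin d) ℝ) - W₀ =
      Matrix.diagonal (fun i => c - f i) := by
    rw [hW₀]
    ext i j
    rcases eq_or_ne i j with rfl | h
    · simp [Matrix.sub_apply, Matrix.smul_apply, Matrix.diagonal_apply_eq, Matrix.one_apply_eq]
    · simp [Matrix.sub_apply, Matrix.smul_apply, Matrix.diagonal_apply_ne _ h,
        Matrix.one_apply_ne h]
  have hpsd2 : (c • (1 : Matrix (Fin d) (Fin d) ℝ) - W₀).PosSemidef := by
    rw [hdiag2]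
    refine Matrix.posSemidef_diagonal_iff.mpr fun i => ?_
    rw [hf]; dsimp only; split_ifs <;> simp [le_of_lt hcpos]
  have hfeas : W₀ ∈ feasWK d k := ⟨hpsd, by rw [← hc]; exact hpsd2, htr⟩
  -- eigenvalues of W₀ satisfy σ² = cσ
  have hsq : W₀ * W₀ = c • W₀ := by
    rw [hW₀, Matrix.diagonal_mul_diagonal, ← Matrix.diagonal_smul]
    ext i j
    rcases eq_or_ne i j with rfl | h
    · simp only [Matrix.diagonal_apply_eq, hf, Pi.smul_apply, smul_eq_mul]
      split_ifs <;> ring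
    · simp [Matrix.diagonal_apply_ne _ h]
  have hherm : W₀.IsHermitian := hpsd.1
  have heig : ∀ i, hherm.eigenvalues i * Real.log (hherm.eigenvalues i)
      = hherm.eigenvalues i * Real.log c := by
    intro i
    set σ := hherm.eigenvalues i with hσ
    have hvne : ⇑(hherm.eigenvectorBasis i) ≠ 0 := by
      have := hherm.eigenvectorBasis.orthonormal.ne_zero i
      intro h; apply this
      ext j; exact congrFun h j
    have h1 : (W₀ * W₀) *ᵥ ⇑(hherm.eigenvectorBasis i) = (σ * σ) • ⇑(hherm.eigenvectorBasis i) := by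
      rw [← Matrix.mulVec_mulVec, hherm.mulVec_eigenvectorBasis, Matrix.mulVec_smul,
        hherm.mulVec_eigenvectorBasis, smul_smul]
    have h2 : (W₀ * W₀) *ᵥ ⇑(hherm.eigenvectorBasis i) = (c * σ) • ⇑(hherm.eigenvectorBasis i) := by
      rw [hsq, Matrix.smul_mulVec, hherm.mulVec_eigenvectorBasis, smul_smul]
    have h3 : (σ * σ - c * σ) • ⇑(hherm.eigenvectorBasis i) = 0 := by
      rw [sub_smul, h1.symm.trans h2]; simp
    have h4 : σ * σ = c * σ := by
      rcases smul_eq_zero.mp h3 with h | h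
      · linarith [sub_eq_zero.mp (by linarith [h] : σ * σ - c * σ = 0)]
      · exact absurd h hvne
    rcases eq_or_ne σ 0 with h0 | h0
    · simp [h0]
    · have : σ = c := by
        field_simp at h4
        linarith
      rw [this]
  have hval : vnPsi W₀ = (1 / 4 : ℝ) * Real.log ((d : ℝ) / ((d : ℝ) - (k : ℝ))) := by
    rw [vnPsi, traceMulLog hherm]
    have : ∑ i, hherm.eigenvalues i * Real.log (hherm.eigenvalues i)
        = ∑ i, hherm.eigenvalues i * Real.log c := Finset.sum_congr rfl fun i _ => heig i
    rw [this, ← Finset.sum_mul, ← trace_eq_sum_eigs hherm, htr, one_mul, hlogd]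
  refine ⟨?_, ⟨hfeas, hval⟩, ?_⟩
  · intro W hW
    obtain ⟨hW1, hW2, hW3⟩ := hW
    have hherm' : W.IsHermitian := hW1.1
    have hbound : ∀ i, hherm'.eigenvalues i * Real.log (hherm'.eigenvalues i)
        ≤ hherm'.eigenvalues i * Real.log c := by
      intro i
      have h0 : 0 ≤ hherm'.eigenvalues i := hW1.eigenvalues_nonneg i
      have hle : hherm'.eigenvalues i ≤ c := eig_le hherm' c (by rw [hc]; exact hW2) i
      rcases eq_or_lt_of_le h0 with h | h
      · simp [← h]
      · exact mul_le_mul_of_nonneg_left (Real.log_le_log h hle) h0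
    rw [vnPsi, traceMulLog hherm']
    calc (1/4 : ℝ) * ((∑ i, hherm'.eigenvalues i * Real.log (hherm'.eigenvalues i)) + Real.log d)
        ≤ (1/4 : ℝ) * ((∑ i, hherm'.eigenvalues i * Real.log c) + Real.log d) := by
          have hs : (∑ i, hherm'.eigenvalues i * Real.log (hherm'.eigenvalues i))
              ≤ ∑ i, hherm'.eigenvalues i * Real.log c :=
            Finset.sum_le_sum fun i _ => hbound i
          linarith
      _ = (1/4 : ℝ) * Real.log ((d : ℝ) / ((d : ℝ) - (k : ℝ))) := by
          rw [← Finset.sum_mul, ← trace_eq_sum_eigs hherm', hW3, one_mul, hlogd]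
  · have hpos : 0 < (d : ℝ) / ((d : ℝ) - (k : ℝ)) := by positivity
    have := Real.log_le_sub_one_of_pos hpos
    have heq : (d : ℝ) / ((d : ℝ) - (k : ℝ)) - 1 = (k : ℝ) / ((d : ℝ) - (k : ℝ)) := by
      field_simp
      ring
    rw [heq] at this
    linarith
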